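/- Let A be a symmetric positive definite n×n real matrix and B an m×n real matrix of full row rank m (m ≤ n), and set S := B A⁻¹ Bᵀ. Let 𝒜 := [[A, Bᵀ], [B, 0]] be the saddle-point matrix and P₂ := [[A, 0], [B, −S]] the block triangular ideal preconditioner. Then every eigenvalue of P₂⁻¹ 𝒜 equals 1. -/

import Mathlib

open Matrix

/-- Ideal block triangular preconditioning of a saddle-point matrix: with `A` symmetric
positive definite, `B` of full row rank, `S = B A⁻¹ Bᵀ`, `𝒜 = [[A, Bᵀ], [B, 0]]` and
`P₂ = [[A, 0], [B, -S]]`, every eigenvalue of `P₂⁻¹ 𝒜` equals `1`. -/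
theorem ideal_block_triangular_precond_eigs {n m : ℕ}
    (A : Matrix (Fin n) (Fin n) ℝ) (hA : A.PosDef)
    (B : Matrix (Fin m) (Fin n) ℝ) (hB : B.rank = m)
    (μ : ℂ) (v : (Fin n ⊕ Fin m) → ℂ) (hv : v ≠ 0)
    (heig : (((Matrix.fromBlocks A 0 B (-(B * A⁻¹ * Bᵀ)))⁻¹ *
        Matrix.fromBlocks A Bᵀ B 0).map Complex.ofReal) *ᵥ v = μ • v) :
    μ = 1 := by
  classical
  have hAdet : IsUnit A.det := hA.det_pos.ne'.isUnit
  have hAinv : (A⁻¹).PosDef := hA.inv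
  -- Bᵀ has trivial kernel as a linear map via mulVec
  have hker : ∀ x : Fin m → ℝ, Bᵀ *ᵥ x = 0 → x = 0 := by
    have hrankT : (Bᵀ).rank = m := by rw [Matrix.rank_transpose, hB]
    have h1 : (Bᵀ).rank + Module.finrank ℝ (LinearMap.ker (Bᵀ).mulVecLin) = m := by
      rw [Matrix.rank]
      rw [LinearMap.finrank_range_add_finrank_ker (Bᵀ).mulVecLin,
        Module.finrank_fintype_fun_eq_card, Fintype.card_fin]
    have h2 : Module.finrank ℝ (LinearMap.ker (Bᵀ).mulVecLin) = 0 := by omega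
    have h3 : LinearMap.ker (Bᵀ).mulVecLin = ⊥ :=
      Submodule.finrank_eq_zero.mp h2
    intro x hx
    have hmem : x ∈ LinearMap.ker (Bᵀ).mulVecLin := hx
    rw [h3] at hmem
    exact hmem
  -- S = B A⁻¹ Bᵀ is positive definite
  have hS : (B * A⁻¹ * Bᵀ).PosDef := by
    refine Matrix.PosDef.of_dotProduct_mulVec_pos ?_ ?_
    · have := (hAinv.posSemidef.mul_mul_conjTranspose_same B).isHermitian
      simpa [Matrix.conjTranspose_eq_transpose_of_trivial] using this
    · intro x hx
      have hxB : Bᵀ *ᵥ x ≠ 0 := fun h => hx (hker x h)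
      have hpos := hAinv.dotProduct_mulVec_pos hxB
      have hrw : star x ⬝ᵥ (B * A⁻¹ * Bᵀ) *ᵥ x
          = star (Bᵀ *ᵥ x) ⬝ᵥ A⁻¹ *ᵥ (Bᵀ *ᵥ x) := by
        simp only [star_trivial, ← Matrix.mulVec_mulVec, Matrix.dotProduct_mulVec,
          ← Matrix.mulVec_transpose]
      rw [hrw]
      exact hpos
  -- P₂ has unit determinant
  have hPdet : IsUnit (Matrix.fromBlocks A 0 B (-(B * A⁻¹ * Bᵀ))).det := by
    rw [Matrix.det_fromBlocks_zero₁₂, Matrix.det_neg, Fintype.card_fin]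
    refine (hA.det_pos.ne'.isUnit).mul ?_
    exact (IsUnit.pow m (isUnit_one.neg)).mul hS.det_pos.ne'.isUnit
  -- the key factorization
  have hPM : Matrix.fromBlocks A 0 B (-(B * A⁻¹ * Bᵀ)) *
      Matrix.fromBlocks 1 (A⁻¹ * Bᵀ) 0 1 = Matrix.fromBlocks A Bᵀ B 0 := by
    rw [Matrix.fromBlocks_multiply]
    simp only [Matrix.mul_one, Matrix.zero_mul, Matrix.mul_zero, add_zero,
      ← Matrix.mul_assoc, Matrix.mul_nonsing_inv A hAdet, Matrix.one_mul,
      add_neg_cancel]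
  have hkey : (Matrix.fromBlocks A 0 B (-(B * A⁻¹ * Bᵀ)))⁻¹ * Matrix.fromBlocks A Bᵀ B 0
      = Matrix.fromBlocks 1 (A⁻¹ * Bᵀ) 0 1 := by
    rw [← hPM, ← Matrix.mul_assoc, Matrix.nonsing_inv_mul _ hPdet, Matrix.one_mul]
  rw [hkey] at heig
  -- pass to ℂ and split as 1 + N with N² = 0
  set C : Matrix (Fin n) (Fin m) ℂ := (A⁻¹ * Bᵀ).map Complex.ofReal with hC
  have hmap : (Matrix.fromBlocks (1 : Matrix (Fin n) (Fin n) ℝ) (A⁻¹ * Bᵀ) 0 1).map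
      Complex.ofReal = (1 : Matrix (Fin n ⊕ Fin m) (Fin n ⊕ Fin m) ℂ) + Matrix.fromBlocks 0 C 0 0 := by
    have h1 : (1 : Matrix (Fin n ⊕ Fin m) (Fin n ⊕ Fin m) ℂ) + Matrix.fromBlocks 0 C 0 0
        = Matrix.fromBlocks 1 C 0 1 := by
      rw [← Matrix.fromBlocks_one, Matrix.fromBlocks_add]
      simp
    rw [Matrix.fromBlocks_map, h1, hC,
      Matrix.map_one _ Complex.ofReal_zero Complex.ofReal_one,
      Matrix.map_zero _ Complex.ofReal_zero,
      Matrix.map_one _ Complex.ofReal_zero Complex.ofReal_one]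
  rw [hmap] at heig
  set N : Matrix (Fin n ⊕ Fin m) (Fin n ⊕ Fin m) ℂ := Matrix.fromBlocks 0 C 0 0 with hN
  have hNv : N *ᵥ v = (μ - 1) • v := by
    have := heig
    rw [Matrix.add_mulVec, Matrix.one_mulVec] at this
    have h' : N *ᵥ v = μ • v - v := by
      rw [← this]; abel
    rw [h', sub_smul, one_smul]
  have hN2 : N * N = 0 := by
    rw [hN, Matrix.fromBlocks_multiply]
    simp
  have hfinal : ((μ - 1) * (μ - 1)) • v = 0 := by
    have h1 : N *ᵥ (N *ᵥ v) = 0 := by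
      rw [Matrix.mulVec_mulVec, hN2, Matrix.zero_mulVec]
    rw [hNv, Matrix.mulVec_smul, hNv, smul_smul] at h1
    exact h1
  rcases smul_eq_zero.mp hfinal with h | h
  · have := mul_self_eq_zero.mp h
    linear_combination this
  · exact absurd h hv
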